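/- Let L be an infinite locally compact Hausdorff topological space that is not compact. Then every somewhat regular closed linear subspace 𝒜 of C₀(L) is almost square: whenever n ∈ ℕ and x₁, …, xₙ ∈ 𝒜 have norm 1, there exists a sequence (y_k) in the closed unit ball of 𝒜 such that ‖xᵢ + y_k‖ → 1 and ‖xᵢ − y_k‖ → 1 as k → ∞ for every i ∈ {1, …, n}, and ‖y_k‖ → 1 as k → ∞. -/

import Mathlib

open scoped ZeroAtInfty
open Filter Topology

/-- A linear subspace `𝒜` of `C₀(L, ℝ)` is *somewhat regular* if for every non-empty open
subset `V` of `L` and every `ε` with `0 < ε < 1` there is `f ∈ 𝒜` with `‖f‖ = 1` and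
`|f x| ≤ ε` for every `x ∈ L \ V`. -/
def SomewhatRegular {L : Type*} [TopologicalSpace L]
    (𝒜 : Submodule ℝ C₀(L, ℝ)) : Prop :=
  ∀ V : Set L, IsOpen V → V.Nonempty → ∀ ε : ℝ, 0 < ε → ε < 1 →
    ∃ f ∈ 𝒜, ‖f‖ = 1 ∧ ∀ x ∉ V, |f x| ≤ ε

/-- If `L` is non-compact, every somewhat regular closed linear subspace of `C₀(L)` is
almost square. -/
theorem somewhat_regular_ASQ
    {L : Type*} [TopologicalSpace L] [LocallyCompactSpace L] [T2Space L] [Infinite L]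
    (hL : ¬ CompactSpace L)
    (𝒜 : Submodule ℝ C₀(L, ℝ)) (hclosed : IsClosed (𝒜 : Set C₀(L, ℝ)))
    (h𝒜 : SomewhatRegular 𝒜)
    (n : ℕ) (x : Fin n → 𝒜) (hx : ∀ i, ‖x i‖ = 1) :
    ∃ y : ℕ → 𝒜,
      (∀ k, ‖y k‖ ≤ 1) ∧
      (∀ i, Tendsto (fun k => ‖x i + y k‖) atTop (𝓝 1)) ∧
      (∀ i, Tendsto (fun k => ‖x i - y k‖) atTop (𝓝 1)) ∧
      Tendsto (fun k => ‖y k‖) atTop (𝓝 1) := by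
  -- pointwise norm bounds in C₀
  have hpt : ∀ (f : C₀(L, ℝ)) (q : L), |f q| ≤ ‖f‖ := fun f q => by
    rw [← ZeroAtInftyContinuousMap.norm_toBCF_eq_norm]
    simpa using f.toBCF.norm_coe_le_norm q
  have hnle : ∀ (f : C₀(L, ℝ)) (C : ℝ), 0 ≤ C → (∀ q, |f q| ≤ C) → ‖f‖ ≤ C := by
    intro f C hC hb
    rw [← ZeroAtInftyContinuousMap.norm_toBCF_eq_norm]
    exact (BoundedContinuousFunction.norm_le hC).2 (by simpa using hb)
  -- the key construction for each ε
  have key : ∀ ε : ℝ, 0 < ε → ε < 1/2 →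
      ∃ g ∈ 𝒜, ‖g‖ = 1 ∧ ∀ i : Fin n,
        (1 - 2*ε ≤ ‖(x i : C₀(L,ℝ)) + g‖ ∧ ‖(x i : C₀(L,ℝ)) + g‖ ≤ 1 + ε) ∧
        (1 - 2*ε ≤ ‖(x i : C₀(L,ℝ)) - g‖ ∧ ‖(x i : C₀(L,ℝ)) - g‖ ≤ 1 + ε) := by
    intro ε hε hε2
    -- compact set outside of which all x i are small
    have h1 : ∀ i : Fin n, ∀ᶠ q in cocompact L, |((x i : C₀(L,ℝ)) q)| < ε := by
      intro i
      have := (x i : C₀(L,ℝ)).zero_at_infty'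
      have := this (Metric.ball_mem_nhds (0:ℝ) hε)
      filter_upwards [this] with q hq
      simpa [Real.dist_eq] using hq
    obtain ⟨K, hK, hKc⟩ := Filter.mem_cocompact.mp (Filter.eventually_all.2 h1)
    -- the complement of K is open and nonempty
    have hKne : Kᶜ.Nonempty := by
      by_contra h
      rw [Set.not_nonempty_iff_eq_empty, Set.compl_empty_iff] at h
      exact hL ⟨h ▸ hK⟩
    obtain ⟨g, hg𝒜, hgnorm, hgsmall⟩ := h𝒜 Kᶜ hK.isClosed.isOpen_compl hKne ε hε
      (lt_trans hε2 (by norm_num))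
    refine ⟨g, hg𝒜, hgnorm, fun i => ?_⟩
    -- a point where |g| is large
    have hp : ∃ p, 1 - ε < |g p| := by
      by_contra h
      push_neg at h
      have := hnle g (1 - ε) (by linarith) h
      rw [hgnorm] at this; linarith
    obtain ⟨p, hp⟩ := hp
    have hpV : p ∈ Kᶜ := by
      by_contra hpK
      have := hgsmall p hpK
      linarith
    have hxp : |(x i : C₀(L,ℝ)) p| < ε := hKc hpV i
    have hxi : ‖(x i : C₀(L,ℝ))‖ = 1 := hx i
    have hub : ∀ q, |(x i : C₀(L,ℝ)) q| + |g q| ≤ 1 + ε := by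
      intro q
      by_cases hq : q ∈ K
      · have h1 : |(x i : C₀(L,ℝ)) q| ≤ 1 := hxi ▸ hpt _ q
        have h2 : |g q| ≤ ε := hgsmall q (by simpa using hq)
        linarith
      · have h1 : |(x i : C₀(L,ℝ)) q| < ε := hKc (by simpa using hq) i
        have h2 : |g q| ≤ 1 := hgnorm ▸ hpt g q
        linarith
    constructor
    · constructor
      · calc 1 - 2*ε ≤ |g p| - |(x i : C₀(L,ℝ)) p| := by linarith
          _ ≤ |(x i : C₀(L,ℝ)) p + g p| := by
              have h := abs_sub_abs_le_abs_sub (g p) (-((x i : C₀(L,ℝ)) p))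
              rw [abs_neg, sub_neg_eq_add, add_comm] at h
              exact h
          _ ≤ ‖(x i : C₀(L,ℝ)) + g‖ := by
              have := hpt ((x i : C₀(L,ℝ)) + g) p
              simpa using this
      · refine hnle _ _ (by linarith) fun q => ?_
        calc |((x i : C₀(L,ℝ)) + g) q| ≤ |(x i : C₀(L,ℝ)) q| + |g q| := by
              simpa using abs_add_le _ _
          _ ≤ 1 + ε := hub q
    · constructor
      · calc 1 - 2*ε ≤ |g p| - |(x i : C₀(L,ℝ)) p| := by linarith
          _ ≤ |(x i : C₀(L,ℝ)) p - g p| := by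
              have := abs_sub_abs_le_abs_sub (g p) ((x i : C₀(L,ℝ)) p)
              rw [abs_sub_comm] at this; linarith
          _ ≤ ‖(x i : C₀(L,ℝ)) - g‖ := by
              have := hpt ((x i : C₀(L,ℝ)) - g) p
              simpa using this
      · refine hnle _ _ (by linarith) fun q => ?_
        calc |((x i : C₀(L,ℝ)) - g) q| ≤ |(x i : C₀(L,ℝ)) q| + |g q| := by
              simpa using abs_sub _ _
          _ ≤ 1 + ε := hub q
  -- apply with ε = 1/(k+3)
  have hεk : ∀ k : ℕ, (0:ℝ) < 1/(k+3) ∧ (1:ℝ)/(k+3) < 1/2 := by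
    intro k
    constructor
    · positivity
    · rw [div_lt_div_iff₀ (by positivity) (by norm_num)]
      push_cast; linarith
  have hinv : Tendsto (fun k : ℕ => (1:ℝ)/(k+3)) atTop (𝓝 0) := by
    have h3 : Tendsto (fun k : ℕ => ((k:ℝ)+3)) atTop atTop :=
      tendsto_atTop_add_const_right _ _ tendsto_natCast_atTop_atTop
    simp only [one_div]; exact h3.inv_tendsto_atTop
  have hlow : Tendsto (fun k : ℕ => 1 - 2*(1/(k+3):ℝ)) atTop (𝓝 1) := by
    have h := (tendsto_const_nhds : Tendsto (fun _ : ℕ => (1:ℝ)) atTop (𝓝 1)).sub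
      (hinv.const_mul 2)
    simpa using h
  have hhigh : Tendsto (fun k : ℕ => 1 + (1/(k+3):ℝ)) atTop (𝓝 1) := by
    have h := (tendsto_const_nhds : Tendsto (fun _ : ℕ => (1:ℝ)) atTop (𝓝 1)).add hinv
    simpa using h
  choose g hg𝒜 hgnorm hbnd using fun k : ℕ => key (1/(k+3)) (hεk k).1 (hεk k).2
  refine ⟨fun k => ⟨g k, hg𝒜 k⟩, fun k => le_of_eq (hgnorm k), ?_, ?_, ?_⟩
  · intro i
    refine tendsto_of_tendsto_of_tendsto_of_le_of_le hlow hhigh ?_ ?_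
    · intro k; exact ((hbnd k i).1).1
    · intro k; exact ((hbnd k i).1).2
  · intro i
    refine tendsto_of_tendsto_of_tendsto_of_le_of_le hlow hhigh ?_ ?_
    · intro k; exact ((hbnd k i).2).1
    · intro k; exact ((hbnd k i).2).2
  · simpa [hgnorm] using tendsto_const_nhds
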